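/- For every real y with \(|y| \le 1/5\), the iterated derivatives of the stable self-similar Burgers profile satisfy \(|\overline{W}^{(3)}(y)| \le 6\), \(|\overline{W}^{(4)}(y)| \le 30\), and \(|\overline{W}^{(5)}(y)| \le 360\). -/

import Mathlib

/-- The stable self-similar Burgers profile. -/
noncomputable def burgersW (y : ℝ) : ℝ :=
  (-(y / 2) + Real.sqrt (1 / 27 + y ^ 2 / 4)) ^ ((1 : ℝ) / 3)
    - (y / 2 + Real.sqrt (1 / 27 + y ^ 2 / 4)) ^ ((1 : ℝ) / 3)

lemma burgersW_sqrt_pos (y : ℝ) :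
    0 < -(y / 2) + Real.sqrt (1 / 27 + y ^ 2 / 4)
      ∧ 0 < y / 2 + Real.sqrt (1 / 27 + y ^ 2 / 4) := by
  have hpos : (0:ℝ) < 1 / 27 + y ^ 2 / 4 := by positivity
  set s : ℝ := Real.sqrt (1 / 27 + y ^ 2 / 4) with hs
  have hs2 : s ^ 2 = 1 / 27 + y ^ 2 / 4 := Real.sq_sqrt hpos.le
  have hsy : |y| / 2 < s := by
    have h1 : Real.sqrt (y ^ 2 / 4) < s := by
      apply Real.sqrt_lt_sqrt (by positivity); linarith
    have h2 : Real.sqrt (y ^ 2 / 4) = |y| / 2 := by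
      have : y ^ 2 / 4 = (|y| / 2) ^ 2 := by rw [div_pow, sq_abs]; norm_num
      rw [this]; exact Real.sqrt_sq (by positivity)
    linarith [h2 ▸ h1]
  constructor <;> nlinarith [le_abs_self y, neg_abs_le y]

lemma burgersW_cubic (y : ℝ) : burgersW y ^ 3 + burgersW y + y = 0 := by
  set s : ℝ := Real.sqrt (1 / 27 + y ^ 2 / 4) with hs
  obtain ⟨ha, hb⟩ := burgersW_sqrt_pos y
  set a : ℝ := -(y / 2) + s with hadef
  set b : ℝ := y / 2 + s with hbdef
  set A : ℝ := a ^ ((1:ℝ)/3) with hA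
  set B : ℝ := b ^ ((1:ℝ)/3) with hB
  have hA3 : A ^ (3:ℕ) = a := by
    rw [hA, ← Real.rpow_natCast (a ^ ((1:ℝ)/3)) 3, ← Real.rpow_mul ha.le]; norm_num
  have hB3 : B ^ (3:ℕ) = b := by
    rw [hB, ← Real.rpow_natCast (b ^ ((1:ℝ)/3)) 3, ← Real.rpow_mul hb.le]; norm_num
  have hs2 : s ^ 2 = 1 / 27 + y ^ 2 / 4 := Real.sq_sqrt (by positivity)
  have hab : a * b = 1 / 27 := by rw [hadef, hbdef]; nlinarith [hs2]
  have hAB : A * B = 1 / 3 := by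
    rw [hA, hB, ← Real.mul_rpow ha.le hb.le, hab,
      show ((1:ℝ)/27) = (1/3) ^ (3:ℕ) by norm_num,
      ← Real.rpow_natCast ((1:ℝ)/3) 3, ← Real.rpow_mul (by norm_num)]
    norm_num
  have hW : burgersW y = A - B := rfl
  have hab' : a - b = -y := by rw [hadef, hbdef]; ring
  rw [hW]
  have hcube : (A - B) ^ 3 = A ^ 3 - B ^ 3 - 3 * (A * B) * (A - B) := by ring
  rw [hcube]
  push_cast at hA3 hB3
  rw [hA3, hB3, hAB]
  linarith

lemma continuous_burgersW : Continuous burgersW := by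
  have h13 : Continuous fun x : ℝ => x ^ ((1:ℝ)/3) := by
    rw [continuous_iff_continuousAt]
    intro x
    exact Real.continuousAt_rpow_const x _ (Or.inr (by norm_num))
  have hsq : Continuous fun y : ℝ => Real.sqrt (1 / 27 + y ^ 2 / 4) := by
    apply Real.continuous_sqrt.comp; continuity
  unfold burgersW
  apply Continuous.sub
  · exact h13.comp (by continuity)
  · exact h13.comp (by continuity)

lemma hasDerivAt_burgersW (y : ℝ) :
    HasDerivAt burgersW (-(1 / (1 + 3 * burgersW y ^ 2))) y := by
  have hc : (0:ℝ) < 1 + 3 * burgersW y ^ 2 := by positivity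
  have h := HasDerivAt.of_local_left_inverse (f := fun w : ℝ => -w - w ^ 3)
    (g := burgersW) (f' := -1 - 3 * burgersW y ^ 2) (a := y)
    (continuous_burgersW.continuousAt)
    ?_ (by nlinarith) ?_
  · refine h.congr_deriv (Eq.symm ?_)
    rw [eq_comm, inv_eq_iff_eq_inv, ← one_div]
    field_simp
    ring
  · have h1 : HasDerivAt (fun w : ℝ => -w - w ^ 3)
        (-1 - 3 * burgersW y ^ 2) (burgersW y) := by
      have := ((hasDerivAt_id (burgersW y)).neg).sub
        ((hasDerivAt_id (burgersW y)).pow 3)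
      refine this.congr_deriv (Eq.symm ?_)
      simp
    exact h1
  · filter_upwards with z
    have := burgersW_cubic z
    ring_nf
    ring_nf at this
    linarith

noncomputable def bC (y : ℝ) : ℝ := 1 + 3 * burgersW y ^ 2
noncomputable def bD1 (y : ℝ) : ℝ := -(1 / bC y)
noncomputable def bD2 (y : ℝ) : ℝ := -6 * burgersW y / bC y ^ 3
noncomputable def bD3 (y : ℝ) : ℝ := (6 * bC y - 108 * burgersW y ^ 2) / bC y ^ 5
noncomputable def bD4 (y : ℝ) : ℝ :=
  (360 * (bC y * burgersW y) - 3240 * burgersW y ^ 3) / bC y ^ 7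
noncomputable def bD5 (y : ℝ) : ℝ :=
  (-360 * bC y ^ 2 + 22680 * burgersW y ^ 2 * bC y - 136080 * burgersW y ^ 4) / bC y ^ 9

lemma bC_pos (y : ℝ) : 0 < bC y := by unfold bC; positivity

lemma hasDerivAt_burgersW' (y : ℝ) : HasDerivAt burgersW (bD1 y) y :=
  hasDerivAt_burgersW y

lemma hasDerivAt_bC (y : ℝ) : HasDerivAt bC (-(6 * burgersW y / bC y)) y := by
  have hu := hasDerivAt_burgersW' y
  have h := ((hu.pow 2).const_mul (3:ℝ)).const_add 1
  have hne := (bC_pos y).ne'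
  refine h.congr_deriv (Eq.symm ?_)
  unfold bD1 at *
  field_simp
  ring

lemma hasDerivAt_bD1 (y : ℝ) : HasDerivAt bD1 (bD2 y) y := by
  have hbc := hasDerivAt_bC y
  have hne := (bC_pos y).ne'
  have h := (((hasDerivAt_const y (1:ℝ)).div hbc hne)).neg
  refine h.congr_deriv (Eq.symm ?_)
  unfold bD2
  field_simp
  ring

lemma hasDerivAt_bD2 (y : ℝ) : HasDerivAt bD2 (bD3 y) y := by
  have hu := hasDerivAt_burgersW' y
  have hbc := hasDerivAt_bC y
  have hne := (bC_pos y).ne'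
  have h := (hu.const_mul (-6:ℝ)).div (hbc.pow 3) (pow_ne_zero _ hne)
  have h' : HasDerivAt bD2 _ y := h
  convert h' using 1
  unfold bD3 bD1
  simp only [Pi.pow_apply, Pi.sub_apply, Pi.mul_apply]
  field_simp
  ring

lemma hasDerivAt_bD3 (y : ℝ) : HasDerivAt bD3 (bD4 y) y := by
  have hu := hasDerivAt_burgersW' y
  have hbc := hasDerivAt_bC y
  have hne := (bC_pos y).ne'
  have h := ((hbc.const_mul (6:ℝ)).sub ((hu.pow 2).const_mul 108)).div
    (hbc.pow 5) (pow_ne_zero _ hne)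
  have h' : HasDerivAt bD3 _ y := h
  convert h' using 1
  unfold bD4 bD1
  simp only [Pi.pow_apply, Pi.sub_apply, Pi.mul_apply]
  field_simp
  ring

lemma hasDerivAt_bD4 (y : ℝ) : HasDerivAt bD4 (bD5 y) y := by
  have hu := hasDerivAt_burgersW' y
  have hbc := hasDerivAt_bC y
  have hne := (bC_pos y).ne'
  have h := (((hbc.mul hu).const_mul (360:ℝ)).sub ((hu.pow 3).const_mul 3240)).div
    (hbc.pow 7) (pow_ne_zero _ hne)
  have h' : HasDerivAt bD4 _ y := h
  convert h' using 1
  unfold bD5 bD1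
  simp only [Pi.pow_apply, Pi.sub_apply, Pi.mul_apply]
  field_simp
  ring

lemma abs_burgersW_le (y : ℝ) (hy : |y| ≤ 1 / 5) : |burgersW y| ≤ 1 / 5 := by
  have hc := burgersW_cubic y
  set u := burgersW y with hu
  have h1 : y = -(u * (1 + u ^ 2)) := by linear_combination hc
  have h2 : |y| = |u| * (1 + u ^ 2) := by
    rw [h1, abs_neg, abs_mul, abs_of_pos (by positivity : (0:ℝ) < 1 + u ^ 2)]
  nlinarith [abs_nonneg u, sq_nonneg u]

/-- Near the origin (`|y| ≤ 1/5`) the higher iterated derivatives of `W̄` satisfy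
`|W̄⁽³⁾(y)| ≤ 6`, `|W̄⁽⁴⁾(y)| ≤ 30`, and `|W̄⁽⁵⁾(y)| ≤ 360`. -/
theorem burgersW_higher_derivs_near_zero (y : ℝ) (hy : |y| ≤ 1 / 5) :
    |iteratedDeriv 3 burgersW y| ≤ 6 ∧
      |iteratedDeriv 4 burgersW y| ≤ 30 ∧
      |iteratedDeriv 5 burgersW y| ≤ 360 := by
  have e0 : deriv burgersW = bD1 := funext fun z => (hasDerivAt_burgersW' z).deriv
  have e1 : deriv bD1 = bD2 := funext fun z => (hasDerivAt_bD1 z).deriv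
  have e2 : deriv bD2 = bD3 := funext fun z => (hasDerivAt_bD2 z).deriv
  have e3 : deriv bD3 = bD4 := funext fun z => (hasDerivAt_bD3 z).deriv
  have e4 : deriv bD4 = bD5 := funext fun z => (hasDerivAt_bD4 z).deriv
  have h3 : iteratedDeriv 3 burgersW = bD3 := by
    rw [show (3:ℕ) = 2 + 1 from rfl, iteratedDeriv_succ, show (2:ℕ) = 1 + 1 from rfl,
      iteratedDeriv_succ, iteratedDeriv_one, e0, e1, e2]
  have h4 : iteratedDeriv 4 burgersW = bD4 := by
    rw [show (4:ℕ) = 3 + 1 from rfl, iteratedDeriv_succ, h3, e3]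
  have h5 : iteratedDeriv 5 burgersW = bD5 := by
    rw [show (5:ℕ) = 4 + 1 from rfl, iteratedDeriv_succ, h4, e4]
  have hut : |burgersW y| ≤ 1 / 5 := abs_burgersW_le y hy
  set u := burgersW y with hudef
  have hu2 : u ^ 2 ≤ 1 / 25 := by nlinarith [sq_abs u, abs_nonneg u]
  have hcpos : (0:ℝ) < 1 + 3 * u ^ 2 := by positivity
  have hCe : bC y = 1 + 3 * u ^ 2 := rfl
  refine ⟨?_, ?_, ?_⟩
  · rw [h3]
    show |(6 * bC y - 108 * u ^ 2) / bC y ^ 5| ≤ 6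
    rw [hCe, abs_div, abs_of_pos (by positivity : (0:ℝ) < (1 + 3 * u ^ 2) ^ 5),
      div_le_iff₀ (by positivity), abs_le]
    constructor <;> nlinarith [pow_nonneg (sq_nonneg u) 2, pow_nonneg (sq_nonneg u) 3,
      pow_nonneg (sq_nonneg u) 4, pow_nonneg (sq_nonneg u) 5, sq_nonneg u]
  · rw [h4]
    show |(360 * (bC y * u) - 3240 * u ^ 3) / bC y ^ 7| ≤ 30
    have hnum : 360 * (bC y * u) - 3240 * u ^ 3
        = u * (360 * (1 + 3 * u ^ 2) - 3240 * u ^ 2) := by rw [hCe]; ring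
    rw [hnum, hCe, abs_div, abs_mul,
      abs_of_pos (show (0:ℝ) < 360 * (1 + 3 * u ^ 2) - 3240 * u ^ 2 by nlinarith),
      abs_of_pos (by positivity : (0:ℝ) < (1 + 3 * u ^ 2) ^ 7),
      div_le_iff₀ (by positivity)]
    set t := |u| with htdef
    have ht0 : 0 ≤ t := abs_nonneg u
    have ht2 : t ^ 2 = u ^ 2 := sq_abs u
    rw [show u ^ 2 = t ^ 2 from ht2.symm]
    nlinarith [sq_nonneg (1 - 6*t - (15/2)*t^2 - 9*t^3), sq_nonneg (t^2*(t - 5/64)),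
      sq_nonneg (t^2), sq_nonneg (t^4), sq_nonneg (t^5), sq_nonneg (t^6), sq_nonneg (t^7),
      pow_nonneg ht0 8, pow_nonneg ht0 10, pow_nonneg ht0 12, pow_nonneg ht0 14]
  · rw [h5]
    show |(-360 * bC y ^ 2 + 22680 * u ^ 2 * bC y - 136080 * u ^ 4) / bC y ^ 9| ≤ 360
    rw [hCe, abs_div, abs_of_pos (by positivity : (0:ℝ) < (1 + 3 * u ^ 2) ^ 9),
      div_le_iff₀ (by positivity), abs_le]
    have h0 : (0:ℝ) ≤ u ^ 2 := sq_nonneg u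
    constructor <;>
    nlinarith [sq_nonneg (66 * u^2 - 5), pow_nonneg h0 2, pow_nonneg h0 3, pow_nonneg h0 4,
      pow_nonneg h0 5, pow_nonneg h0 6, pow_nonneg h0 7, pow_nonneg h0 8, pow_nonneg h0 9,
      mul_nonneg h0 h0]
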